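/- In the BSC model with offset φ ≤ x, the probability of the starvation event for file size N equals P_s^<(N,φ,x) = ∑_{k=x+φ−1}^{N−1} ((x+φ−1)/(2k−x−φ+1)) · C(2k−x−φ+1, k−x−φ+1) · p^{k−x−φ+1} · q^k. -/

import Mathlib

/- ### Auxiliary material copied from Mathlib's Archive (Wiedijk100Theorems/BallotProblem),
which is not part of the Mathlib library image we may import. -/

section BallotCopy

open Set ProbabilityTheory MeasureTheory
open scoped ENNReal

namespace Ballot

/-- The set of nonempty lists of integers which suffix has positive sum. -/
def staysPositive : Set (List ℤ) :=
  {l | ∀ l₂, l₂ ≠ [] → l₂ <:+ l → 0 < l₂.sum}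

@[simp]
theorem staysPositive_nil : [] ∈ staysPositive :=
  fun _ hl hl₁ => (hl (List.eq_nil_of_suffix_nil hl₁)).elim

theorem staysPositive_suffix {l₁ l₂ : List ℤ} (hl₂ : l₂ ∈ staysPositive) (h : l₁ <:+ l₂) :
    l₁ ∈ staysPositive := fun l hne hl ↦ hl₂ l hne <| hl.trans h

theorem staysPositive_cons {x : ℤ} {l : List ℤ} :
    x::l ∈ staysPositive ↔ l ∈ staysPositive ∧ 0 < x + l.sum := by
  simp [staysPositive, List.suffix_cons_iff, or_imp, forall_and, @imp.swap _ (_ = _), and_comm]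

theorem sum_nonneg_of_staysPositive : ∀ {l : List ℤ}, l ∈ staysPositive → 0 ≤ l.sum
  | [], _ => le_rfl
  | (_::_), h => (h _ (List.cons_ne_nil _ _) List.suffix_rfl).le

theorem staysPositive_cons_pos (x : ℤ) (hx : 0 < x) (l : List ℤ) :
    (x::l) ∈ staysPositive ↔ l ∈ staysPositive := by
  rw [staysPositive_cons, and_iff_left_iff_imp]
  intro h
  have := sum_nonneg_of_staysPositive h
  positivity

/-- `countedSequence p q` is the set of lists of integers for which every element is `+1` or `-1`,
there are `p` lots of `+1` and `q` lots of `-1`.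

This represents vote sequences where candidate `+1` receives `p` votes and candidate `-1` receives
`q` votes.
-/
def countedSequence (p q : ℕ) : Set (List ℤ) :=
  {l | l.count 1 = p ∧ l.count (-1) = q ∧ ∀ x ∈ l, x = (1 : ℤ) ∨ x = -1}

open scoped List in
/-- An alternative definition of `countedSequence` that uses `List.Perm`. -/
theorem mem_countedSequence_iff_perm {p q l} :
    l ∈ countedSequence p q ↔ l ~ List.replicate p (1 : ℤ) ++ List.replicate q (-1) := by
  rw [List.perm_replicate_append_replicate]
  · simp only [countedSequence, List.subset_def, mem_setOf_eq, List.mem_cons (b := (1 : ℤ)),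
      List.mem_singleton]
  · norm_num1

@[simp]
theorem counted_right_zero (p : ℕ) : countedSequence p 0 = {List.replicate p 1} := by
  ext l; simp [mem_countedSequence_iff_perm]

@[simp]
theorem counted_left_zero (q : ℕ) : countedSequence 0 q = {List.replicate q (-1)} := by
  ext l; simp [mem_countedSequence_iff_perm]

theorem mem_of_mem_countedSequence {p q} {l} (hl : l ∈ countedSequence p q) {x : ℤ} (hx : x ∈ l) :
    x = 1 ∨ x = -1 :=
  hl.2.2 x hx

theorem length_of_mem_countedSequence {p q} {l : List ℤ} (hl : l ∈ countedSequence p q) :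
    l.length = p + q := by simp [(mem_countedSequence_iff_perm.1 hl).length_eq]

theorem counted_eq_nil_iff {p q : ℕ} {l : List ℤ} (hl : l ∈ countedSequence p q) :
    l = [] ↔ p = 0 ∧ q = 0 :=
  List.length_eq_zero_iff.symm.trans <| by simp [length_of_mem_countedSequence hl]

theorem counted_ne_nil_left {p q : ℕ} (hp : p ≠ 0) {l : List ℤ} (hl : l ∈ countedSequence p q) :
    l ≠ [] := by simp [counted_eq_nil_iff hl, hp]

theorem counted_ne_nil_right {p q : ℕ} (hq : q ≠ 0) {l : List ℤ} (hl : l ∈ countedSequence p q) :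
    l ≠ [] := by simp [counted_eq_nil_iff hl, hq]

theorem counted_succ_succ (p q : ℕ) :
    countedSequence (p + 1) (q + 1) =
      List.cons 1 '' countedSequence p (q + 1) ∪ List.cons (-1) '' countedSequence (p + 1) q := by
  ext l
  rw [countedSequence, countedSequence, countedSequence]
  constructor
  · intro hl
    have hlnil := counted_ne_nil_left (Nat.succ_ne_zero p) hl
    obtain ⟨hl₀, hl₁, hl₂⟩ := hl
    obtain hlast | hlast := hl₂ (l.head hlnil) (List.head_mem hlnil)
    · refine Or.inl ⟨l.tail, ⟨?_, ?_, ?_⟩, ?_⟩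
      · rw [List.count_tail, hl₀, List.head?_eq_head hlnil, hlast]; simp
      · rw [List.count_tail, hl₁, List.head?_eq_head hlnil, hlast]; simp
      · exact fun x hx => hl₂ x (List.mem_of_mem_tail hx)
      · rw [← hlast, List.cons_head_tail]
    · refine Or.inr ⟨l.tail, ⟨?_, ?_, ?_⟩, ?_⟩
      · rw [List.count_tail, hl₀, List.head?_eq_head hlnil, hlast]; simp
      · rw [List.count_tail, hl₁, List.head?_eq_head hlnil, hlast]; simp
      · exact fun x hx => hl₂ x (List.mem_of_mem_tail hx)
      · rw [← hlast, List.cons_head_tail]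
  · rintro (⟨t, ⟨ht₀, ht₁, ht₂⟩, rfl⟩ | ⟨t, ⟨ht₀, ht₁, ht₂⟩, rfl⟩)
    · refine ⟨?_, ?_, ?_⟩
      · rw [List.count_cons, beq_self_eq_true, if_pos rfl, ht₀]
      · rw [List.count_cons, if_neg, ht₁]
        norm_num
      · rintro x (_ | _)
        exacts [Or.inl rfl, ht₂ x (by tauto)]
    · refine ⟨?_, ?_, ?_⟩
      · rw [List.count_cons, if_neg, ht₀]
        norm_num
      · rw [List.count_cons, beq_self_eq_true, if_pos rfl, ht₁]
      · rintro x (_ | _)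
        exacts [Or.inr rfl, ht₂ x (by tauto)]

theorem countedSequence_finite : ∀ p q : ℕ, (countedSequence p q).Finite
  | 0, q => by simp
  | p + 1, 0 => by simp
  | p + 1, q + 1 => by
    rw [counted_succ_succ, Set.finite_union, Set.finite_image_iff List.cons_injective.injOn,
      Set.finite_image_iff List.cons_injective.injOn]
    exact ⟨countedSequence_finite _ _, countedSequence_finite _ _⟩

theorem countedSequence_nonempty : ∀ p q : ℕ, (countedSequence p q).Nonempty
  | 0, q => by simp
  | p + 1, 0 => by simp
  | p + 1, q + 1 => by
    rw [counted_succ_succ, union_nonempty, image_nonempty]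
    exact Or.inl (countedSequence_nonempty _ _)

theorem sum_of_mem_countedSequence {p q} {l : List ℤ} (hl : l ∈ countedSequence p q) :
    l.sum = p - q := by simp [(mem_countedSequence_iff_perm.1 hl).sum_eq, sub_eq_add_neg]

theorem disjoint_bits (p q : ℕ) :
    Disjoint (List.cons 1 '' countedSequence p (q + 1))
      (List.cons (-1) '' countedSequence (p + 1) q) := by
  simp_rw [disjoint_left, mem_image, not_exists, exists_imp]
  rintro _ _ ⟨_, rfl⟩ _ ⟨_, _, _⟩

open MeasureTheory.Measure

def measureableSpace_list_int : MeasurableSpace (List ℤ) := ⊤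

attribute [local instance] measureableSpace_list_int

theorem measurableSingletonClass_list_int : MeasurableSingletonClass (List ℤ) :=
  { measurableSet_singleton := fun _ => trivial }

attribute [local instance] measurableSingletonClass_list_int

theorem list_int_measurableSet {s : Set (List ℤ)} : MeasurableSet s := trivial

theorem count_countedSequence : ∀ p q : ℕ, count (countedSequence p q) = (p + q).choose p
  | p, 0 => by simp [counted_right_zero, count_singleton]
  | 0, q => by simp [counted_left_zero, count_singleton]
  | p + 1, q + 1 => by
    rw [counted_succ_succ, measure_union (disjoint_bits _ _) list_int_measurableSet,
      count_injective_image List.cons_injective, count_countedSequence _ _,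
      count_injective_image List.cons_injective, count_countedSequence _ _]
    norm_cast
    rw [add_assoc, add_comm 1 q, ← Nat.choose_succ_succ, Nat.succ_eq_add_one, add_right_comm]

theorem first_vote_pos :
    ∀ p q,
      0 < p + q → uniformOn (countedSequence p q : Set (List ℤ)) {l | l.headI = 1} = p / (p + q)
  | p + 1, 0, _ => by
    rw [counted_right_zero, uniformOn_singleton]
    simp [ENNReal.div_self _ _, List.replicate_succ]
  | 0, q + 1, _ => by
    rw [counted_left_zero, uniformOn_singleton]
    simp only [List.replicate, Nat.add_eq, add_zero, mem_setOf_eq, List.headI_cons, Nat.cast_zero,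
      ENNReal.zero_div, ite_eq_right_iff]
    decide
  | p + 1, q + 1, _ => by
    simp_rw [counted_succ_succ]
    rw [← uniformOn_disjoint_union ((countedSequence_finite _ _).image _)
        ((countedSequence_finite _ _).image _) (disjoint_bits _ _),
      ← counted_succ_succ,
      uniformOn_eq_one_of ((countedSequence_finite p (q + 1)).image _)
        ((countedSequence_nonempty _ _).image _)]
    · have : List.cons (-1) '' countedSequence (p + 1) q ∩ {l : List ℤ | l.headI = 1} = ∅ := by
        ext
        simp only [mem_inter_iff, mem_image, mem_setOf_eq, mem_empty_iff_false, iff_false,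
          not_and, forall_exists_index, and_imp]
        rintro l _ rfl
        norm_num
      have hint :
        countedSequence (p + 1) (q + 1) ∩ List.cons 1 '' countedSequence p (q + 1) =
          List.cons 1 '' countedSequence p (q + 1) := by
        rw [inter_eq_right, counted_succ_succ]
        exact subset_union_left
      rw [(uniformOn_eq_zero_iff <| (countedSequence_finite _ _).image _).2 this, uniformOn,
        cond_apply list_int_measurableSet, hint, count_injective_image List.cons_injective,
        count_countedSequence, count_countedSequence, one_mul, zero_mul, add_zero,
        Nat.cast_add, Nat.cast_one, mul_comm, ← div_eq_mul_inv, ENNReal.div_eq_div_iff]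
      · norm_cast
        rw [mul_comm _ (p + 1), ← Nat.succ_eq_add_one p, Nat.succ_add, Nat.add_one_mul_choose_eq,
          mul_comm]
      all_goals simp [(Nat.choose_pos <| le_add_of_nonneg_right zero_le').ne']
    · simp

theorem headI_mem_of_nonempty {α : Type*} [Inhabited α] : ∀ {l : List α} (_ : l ≠ []), l.headI ∈ l
  | [], h => (h rfl).elim
  | x::l, _ => List.mem_cons_self

theorem first_vote_neg (p q : ℕ) (h : 0 < p + q) :
    uniformOn (countedSequence p q) {l | l.headI = 1}ᶜ = q / (p + q) := by
  have h' : (p + q : ℝ≥0∞) ≠ 0 := mod_cast h.ne'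
  have := uniformOn_compl
    {l : List ℤ | l.headI = 1}ᶜ (countedSequence_finite p q) (countedSequence_nonempty p q)
  rw [compl_compl, first_vote_pos _ _ h] at this
  rw [ENNReal.eq_sub_of_add_eq _ this, ENNReal.eq_div_iff, ENNReal.mul_sub, mul_one,
    ENNReal.mul_div_cancel', ENNReal.add_sub_cancel_left]
  all_goals simp_all [ENNReal.div_eq_top]

theorem ballot_same (p : ℕ) : uniformOn (countedSequence (p + 1) (p + 1)) staysPositive = 0 := by
  rw [uniformOn_eq_zero_iff (countedSequence_finite _ _), eq_empty_iff_forall_notMem]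
  rintro x ⟨hx, t⟩
  apply ne_of_gt (t x _ x.suffix_refl)
  · simpa using sum_of_mem_countedSequence hx
  · refine List.ne_nil_of_length_pos ?_
    rw [length_of_mem_countedSequence hx]
    exact Nat.add_pos_left (Nat.succ_pos _) _

theorem ballot_edge (p : ℕ) : uniformOn (countedSequence (p + 1) 0) staysPositive = 1 := by
  rw [counted_right_zero]
  refine uniformOn_eq_one_of (finite_singleton _) (singleton_nonempty _) ?_
  refine singleton_subset_iff.2 fun l hl₁ hl₂ => List.sum_pos _ (fun x hx => ?_) hl₁
  rw [List.eq_of_mem_replicate (hl₂.mem hx)]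
  norm_num

theorem countedSequence_int_pos_counted_succ_succ (p q : ℕ) :
    countedSequence (p + 1) (q + 1) ∩ {l | l.headI = 1} =
      (countedSequence p (q + 1)).image (List.cons 1) := by
  rw [counted_succ_succ, union_inter_distrib_right,
      (_ : List.cons (-1) '' countedSequence (p + 1) q ∩ {l | l.headI = 1} = ∅), union_empty] <;>
    · ext
      simp only [mem_inter_iff, mem_image, mem_setOf_eq, and_iff_left_iff_imp, mem_empty_iff_false,
        iff_false, not_and, forall_exists_index, and_imp]
      rintro y _ rfl
      norm_num

theorem ballot_pos (p q : ℕ) :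
    uniformOn (countedSequence (p + 1) (q + 1) ∩ {l | l.headI = 1}) staysPositive =
      uniformOn (countedSequence p (q + 1)) staysPositive := by
  rw [countedSequence_int_pos_counted_succ_succ, uniformOn, uniformOn,
    cond_apply list_int_measurableSet, cond_apply list_int_measurableSet,
    count_injective_image List.cons_injective]
  congr 1
  have : (1 :: ·) '' countedSequence p (q + 1) ∩ staysPositive =
      (1 :: ·) '' (countedSequence p (q + 1) ∩ staysPositive) := by
    simp only [image_inter List.cons_injective, Set.ext_iff, mem_inter_iff, and_congr_right_iff,
      forall_mem_image, List.cons_injective.mem_set_image, staysPositive_cons_pos _ one_pos]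
    exact fun _ _ ↦ trivial
  rw [this, count_injective_image]
  exact List.cons_injective

theorem countedSequence_int_neg_counted_succ_succ (p q : ℕ) :
    countedSequence (p + 1) (q + 1) ∩ {l | l.headI = 1}ᶜ =
      (countedSequence (p + 1) q).image (List.cons (-1)) := by
  rw [counted_succ_succ, union_inter_distrib_right,
      (_ : List.cons 1 '' countedSequence p (q + 1) ∩ {l : List ℤ | l.headI = 1}ᶜ = ∅),
      empty_union] <;>
    · ext
      simp only [mem_inter_iff, mem_image, mem_setOf_eq, and_iff_left_iff_imp, mem_empty_iff_false,
        iff_false, not_and, forall_exists_index, and_imp]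
      rintro y _ rfl
      norm_num

theorem ballot_neg (p q : ℕ) (qp : q < p) :
    uniformOn (countedSequence (p + 1) (q + 1) ∩ {l | l.headI = 1}ᶜ) staysPositive =
      uniformOn (countedSequence (p + 1) q) staysPositive := by
  rw [countedSequence_int_neg_counted_succ_succ, uniformOn, uniformOn,
    cond_apply list_int_measurableSet, cond_apply list_int_measurableSet,
    count_injective_image List.cons_injective]
  congr 1
  have : List.cons (-1) '' countedSequence (p + 1) q ∩ staysPositive =
      List.cons (-1) '' (countedSequence (p + 1) q ∩ staysPositive) := by
    simp only [image_inter List.cons_injective, Set.ext_iff, mem_inter_iff, and_congr_right_iff,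
      forall_mem_image, List.cons_injective.mem_set_image, staysPositive_cons, and_iff_left_iff_imp]
    intro l hl _
    simp [sum_of_mem_countedSequence hl, lt_sub_iff_add_lt', qp]
  rw [this, count_injective_image]
  exact List.cons_injective

theorem ballot_problem' :
    ∀ q p, q < p → (uniformOn (countedSequence p q) staysPositive).toReal = (p - q) / (p + q) := by
  classical
  apply Nat.diag_induction
  · intro p
    rw [ballot_same]
    simp
  · intro p
    rw [ballot_edge]
    simp only [ENNReal.toReal_one, Nat.cast_add, Nat.cast_one, Nat.cast_zero, sub_zero, add_zero]
    rw [div_self]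
    exact Nat.cast_add_one_ne_zero p
  · intro q p qp h₁ h₂
    haveI := uniformOn_isProbabilityMeasure
      (countedSequence_finite p (q + 1)) (countedSequence_nonempty _ _)
    haveI := uniformOn_isProbabilityMeasure
      (countedSequence_finite (p + 1) q) (countedSequence_nonempty _ _)
    have h₃ : p + 1 + (q + 1) > 0 := Nat.add_pos_left (Nat.succ_pos _) _
    rw [← uniformOn_add_compl_eq {l : List ℤ | l.headI = 1} _ (countedSequence_finite _ _),
      first_vote_pos _ _ h₃, first_vote_neg _ _ h₃, ballot_pos, ballot_neg _ _ qp]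
    rw [ENNReal.toReal_add, ENNReal.toReal_mul, ENNReal.toReal_mul, ← Nat.cast_add,
      ENNReal.toReal_div, ENNReal.toReal_div, ENNReal.toReal_natCast, ENNReal.toReal_natCast,
      ENNReal.toReal_natCast, h₁, h₂]
    · have h₄ : (p + 1 : ℝ) + (q + 1 : ℝ) ≠ (0 : ℝ) := by
        apply ne_of_gt
        assumption_mod_cast
      have h₅ : (p + 1 : ℝ) + ↑q ≠ (0 : ℝ) := by
        apply ne_of_gt
        norm_cast
        linarith
      have h₆ : ↑p + (q + 1 : ℝ) ≠ (0 : ℝ) := by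
        apply ne_of_gt
        norm_cast
        linarith
      field_simp [h₄, h₅, h₆] at *
      push_cast
      ring
    all_goals exact ENNReal.mul_ne_top (measure_ne_top _ _) (by simp [Ne, ENNReal.div_eq_top])

/-- The ballot problem. -/
theorem ballot_problem :
    ∀ q p, q < p → uniformOn (countedSequence p q) staysPositive = (p - q) / (p + q) := by
  intro q p qp
  haveI :=
    uniformOn_isProbabilityMeasure (countedSequence_finite p q) (countedSequence_nonempty _ _)
  have :
    (uniformOn (countedSequence p q) staysPositive).toReal =
      ((p - q) / (p + q) : ℝ≥0∞).toReal := by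
    rw [ballot_problem' q p qp]
    rw [ENNReal.toReal_div, ← Nat.cast_add, ← Nat.cast_add, ENNReal.toReal_natCast,
      ENNReal.toReal_sub_of_le, ENNReal.toReal_natCast, ENNReal.toReal_natCast]
    exacts [Nat.cast_le.2 qp.le, ENNReal.natCast_ne_top _]
  rwa [ENNReal.toReal_eq_toReal_iff' (measure_lt_top _ _).ne] at this
  simp only [Ne, ENNReal.div_eq_top, tsub_eq_zero_iff_le, Nat.cast_le, not_le,
    add_eq_zero, Nat.cast_eq_zero, ENNReal.add_eq_top, ENNReal.natCast_ne_top, or_self_iff,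
    not_false_iff, and_true]
  push_neg
  exact ⟨fun _ _ => by linarith, (tsub_le_self.trans_lt (ENNReal.natCast_ne_top p).lt_top).ne⟩

end Ballot

end BallotCopy



open MeasureTheory ProbabilityTheory Finset

/-- Number of frame arrivals among the first `n` steps: `a_n = #{i ≤ n : ξ_i = +1}`. -/
def arrivals {Ω : Type*} (ξ : ℕ → Ω → ℤ) (n : ℕ) (ω : Ω) : ℕ :=
  ((Finset.Icc 1 n).filter (fun i => ξ i ω = 1)).card

/-- Number of frames served among the first `n` steps: `d_n = #{i ≤ n : ξ_i = −1}`. -/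
def departures {Ω : Type*} (ξ : ℕ → Ω → ℤ) (n : ℕ) (ω : Ω) : ℕ :=
  ((Finset.Icc 1 n).filter (fun i => ξ i ω = -1)).card

/-- Number of playable frames in the BSC buffer after step `n`:
`B_n = x + a_n − d_n` if `x + a_n ≤ φ − 2`, and
`B_n = x + a_n + φ − 1 − d_n` if `x + a_n ≥ φ − 1`. -/
def buffer {Ω : Type*} (x φ : ℕ) (ξ : ℕ → Ω → ℤ) (n : ℕ) (ω : Ω) : ℤ :=
  if ((x : ℤ) + arrivals ξ n ω) ≤ (φ : ℤ) - 2 then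
    (x : ℤ) + arrivals ξ n ω - departures ξ n ω
  else
    (x : ℤ) + arrivals ξ n ω + (φ : ℤ) - 1 - departures ξ n ω

/-- The starvation event for file size `N`: starvation occurs at some `k`-th
departure with `k ≤ N − 1`. -/
def starvationEvent {Ω : Type*} (x φ N : ℕ) (ξ : ℕ → Ω → ℤ) : Set Ω :=
  {ω | ∃ k ≤ N - 1, ∃ n, ξ n ω = -1 ∧ departures ξ n ω = k ∧ buffer x φ ξ n ω = 0}


section Aux

open scoped ENNReal

attribute [local instance] Ballot.measureableSpace_list_int
  Ballot.measurableSingletonClass_list_int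

namespace BSC

variable {Ω : Type*} (ξ : ℕ → Ω → ℤ)

/-- The list of negated steps `(-ξ 1, ..., -ξ n)`, so that `+1` entries are departures. -/
def patL (n : ℕ) (ω : Ω) : List ℤ := (List.range n).map fun i => -ξ (i+1) ω

@[simp] lemma patL_zero (ω : Ω) : patL ξ 0 ω = [] := by simp [patL]

@[simp] lemma patL_length (n : ℕ) (ω : Ω) : (patL ξ n ω).length = n := by simp [patL]

lemma patL_succ (n : ℕ) (ω : Ω) :
    patL ξ (n+1) ω = patL ξ n ω ++ [-ξ (n+1) ω] := by
  simp [patL, List.range_succ]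

lemma Icc_one_succ (n : ℕ) : Finset.Icc 1 (n+1) = insert (n+1) (Finset.Icc 1 n) := by
  ext i; simp [Finset.mem_Icc, Finset.mem_insert]; omega

@[simp] lemma departures_zero (ω : Ω) : departures ξ 0 ω = 0 := by
  simp [departures]

@[simp] lemma arrivals_zero (ω : Ω) : arrivals ξ 0 ω = 0 := by
  simp [arrivals]

lemma departures_succ (n : ℕ) (ω : Ω) :
    departures ξ (n+1) ω = departures ξ n ω + (if ξ (n+1) ω = -1 then 1 else 0) := by
  unfold departures
  rw [Icc_one_succ, Finset.filter_insert]
  split_ifs with h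
  · rw [Finset.card_insert_of_notMem (by simp [Finset.mem_filter])]
  · simp

lemma arrivals_succ (n : ℕ) (ω : Ω) :
    arrivals ξ (n+1) ω = arrivals ξ n ω + (if ξ (n+1) ω = 1 then 1 else 0) := by
  unfold arrivals
  rw [Icc_one_succ, Finset.filter_insert]
  split_ifs with h
  · rw [Finset.card_insert_of_notMem (by simp [Finset.mem_filter])]
  · simp

lemma count_one_patL (n : ℕ) (ω : Ω) : (patL ξ n ω).count 1 = departures ξ n ω := by
  induction n with
  | zero => simp
  | succ n ih =>
    rw [patL_succ, List.count_append, departures_succ, ih]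
    congr 1
    by_cases h : ξ (n+1) ω = -1 <;> simp [h]
    rw [List.count_eq_zero]
    simp only [List.mem_singleton]
    omega

lemma count_negone_patL (n : ℕ) (ω : Ω) : (patL ξ n ω).count (-1) = arrivals ξ n ω := by
  induction n with
  | zero => simp
  | succ n ih =>
    rw [patL_succ, List.count_append, arrivals_succ, ih]
    congr 1
    by_cases h : ξ (n+1) ω = 1 <;> simp [h]

/-- The walk `S_n = d_n - a_n`. -/
def Sw (n : ℕ) (ω : Ω) : ℤ := (departures ξ n ω : ℤ) - (arrivals ξ n ω : ℤ)

@[simp] lemma Sw_zero (ω : Ω) : Sw ξ 0 ω = 0 := by simp [Sw]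

variable {ξ}

lemma Sw_succ (hv : ∀ i ω, ξ i ω = 1 ∨ ξ i ω = -1) (n : ℕ) (ω : Ω) :
    Sw ξ (n+1) ω = Sw ξ n ω + (-ξ (n+1) ω) := by
  rcases hv (n+1) ω with h | h <;>
    simp only [Sw, departures_succ, arrivals_succ, h] <;> norm_num <;> omega

lemma Sw_succ_le (n : ℕ) (ω : Ω) : Sw ξ (n+1) ω ≤ Sw ξ n ω + 1 := by
  unfold Sw
  rw [departures_succ, arrivals_succ]
  push_cast
  split_ifs <;> omega

lemma sum_patL (hv : ∀ i ω, ξ i ω = 1 ∨ ξ i ω = -1) (n : ℕ) (ω : Ω) :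
    (patL ξ n ω).sum = Sw ξ n ω := by
  induction n with
  | zero => simp
  | succ n ih => rw [patL_succ, List.sum_append, Sw_succ hv, ih]; simp

lemma arrivals_add_departures (hv : ∀ i ω, ξ i ω = 1 ∨ ξ i ω = -1) (n : ℕ) (ω : Ω) :
    arrivals ξ n ω + departures ξ n ω = n := by
  induction n with
  | zero => simp
  | succ n ih =>
    rw [arrivals_succ, departures_succ]
    rcases hv (n+1) ω with h | h <;> rw [h] <;> norm_num <;> omega

lemma patL_take {j n : ℕ} (h : j ≤ n) (ω : Ω) : (patL ξ n ω).take j = patL ξ j ω := by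
  simp [patL, ← List.map_take, List.take_range, Nat.min_eq_left h]

lemma sum_drop_patL (hv : ∀ i ω, ξ i ω = 1 ∨ ξ i ω = -1) {j n : ℕ} (h : j ≤ n) (ω : Ω) :
    ((patL ξ n ω).drop j).sum = Sw ξ n ω - Sw ξ j ω := by
  have h1 := List.take_append_drop j (patL ξ n ω)
  have h2 : (patL ξ n ω).take j = patL ξ j ω := patL_take h ω
  have := congrArg List.sum h1
  rw [List.sum_append, h2, sum_patL hv, sum_patL hv] at this
  omega

lemma departures_mono (ω : Ω) {a b : ℕ} (h : a ≤ b) :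
    departures ξ a ω ≤ departures ξ b ω := by
  apply Finset.card_le_card
  apply Finset.filter_subset_filter
  exact Finset.Icc_subset_Icc_right h

/-- Discrete intermediate value: a walk with upward steps of size at most 1
starting below `c` must hit `c` before exceeding it. -/
lemma exists_hit (f : ℕ → ℤ) (hstep : ∀ i, f (i+1) ≤ f i + 1) (c : ℤ) (h0 : f 0 ≤ c) :
    ∀ j, c ≤ f j → ∃ i ≤ j, f i = c := by
  intro j
  induction j with
  | zero => exact fun hj => ⟨0, le_refl 0, le_antisymm h0 hj⟩
  | succ j ih =>
    intro hj
    by_cases h : c ≤ f j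
    · obtain ⟨i, hi, hfi⟩ := ih h
      exact ⟨i, hi.trans (Nat.le_succ j), hfi⟩
    · exact ⟨j+1, le_refl _, le_antisymm (by have := hstep j; omega) hj⟩


variable (ξ)

/-- The event that the walk `Sw` first hits level `mm` at the `k`-th departure,
expressed via the Ballot-problem sets. -/
def FP (mm k : ℕ) : Set Ω :=
  {ω | patL ξ (k + (k - mm)) ω ∈ Ballot.countedSequence k (k - mm) ∩ Ballot.staysPositive}

variable {ξ}

lemma FP_spec (hv : ∀ i ω, ξ i ω = 1 ∨ ξ i ω = -1) {mm k : ℕ} (hm : 1 ≤ mm) (hk : mm ≤ k)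
    {ω : Ω} (hω : ω ∈ FP ξ mm k) :
    departures ξ (k + (k - mm)) ω = k ∧
    arrivals ξ (k + (k - mm)) ω = k - mm ∧
    Sw ξ (k + (k - mm)) ω = mm ∧
    (∀ j < k + (k - mm), Sw ξ j ω < mm) ∧
    ξ (k + (k - mm)) ω = -1 := by
  obtain ⟨hc, hsp⟩ := hω
  set n := k + (k - mm) with hn
  have hd : departures ξ n ω = k := by rw [← count_one_patL]; exact hc.1
  have ha : arrivals ξ n ω = k - mm := by rw [← count_negone_patL]; exact hc.2.1
  have hS : Sw ξ n ω = mm := by simp only [Sw, hd, ha]; push_cast; omega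
  have hlt : ∀ j < n, Sw ξ j ω < mm := by
    intro j hj
    have hsuf : (patL ξ n ω).drop j <:+ patL ξ n ω := List.drop_suffix _ _
    have hne : (patL ξ n ω).drop j ≠ [] := by
      intro hnil
      have := congrArg List.length hnil
      simp at this
      omega
    have hpos := hsp _ hne hsuf
    rw [sum_drop_patL hv hj.le, hS] at hpos
    omega
  refine ⟨hd, ha, hS, hlt, ?_⟩
  have hn1 : 1 ≤ n := by omega
  obtain ⟨n', hn'⟩ : ∃ n', n = n' + 1 := ⟨n - 1, by omega⟩
  rw [hn'] at hS ⊢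
  have hstep := Sw_succ hv n' ω
  have hprev := hlt n' (by omega)
  rcases hv (n' + 1) ω with h | h
  · rw [h] at hstep; omega
  · exact h

lemma mem_FP_of_first_hit (hv : ∀ i ω, ξ i ω = 1 ∨ ξ i ω = -1) {mm : ℕ} (hm : 1 ≤ mm)
    {n : ℕ} {ω : Ω} (hSn : Sw ξ n ω = mm) (hmin : ∀ j < n, Sw ξ j ω ≠ mm) :
    mm ≤ departures ξ n ω ∧ n = departures ξ n ω + (departures ξ n ω - mm) ∧
      ω ∈ FP ξ mm (departures ξ n ω) := by
  set d := departures ξ n ω with hd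
  set a := arrivals ξ n ω with ha
  have had : a + d = n := arrivals_add_departures hv n ω
  have hSw : (d : ℤ) - a = mm := hSn
  have hmd : mm ≤ d := by omega
  have haeq : a = d - mm := by omega
  have hneq : n = d + (d - mm) := by omega
  have hlt : ∀ j < n, Sw ξ j ω < mm := by
    intro j hj
    by_contra hge
    push_neg at hge
    obtain ⟨i, hij, hi⟩ := exists_hit (fun j => Sw ξ j ω) (fun i => Sw_succ_le i ω) mm
      (by simp) j hge
    exact hmin i (lt_of_le_of_lt hij hj) hi
  refine ⟨hmd, hneq, ?_, ?_⟩
  · refine ⟨?_, ?_, ?_⟩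
    · rw [← hneq, count_one_patL, ← hd]
    · rw [← hneq, count_negone_patL, ← ha, haeq]
    · intro z hz
      simp only [patL, List.mem_map, List.mem_range] at hz
      obtain ⟨i, _, rfl⟩ := hz
      rcases hv (i + 1) ω with h | h <;> simp [h]
  · have hpat : patL ξ (d + (d - mm)) ω = patL ξ n ω := by rw [← hneq]
    intro l₂ hne hsuf
    rw [hpat, List.suffix_iff_eq_drop, patL_length] at hsuf
    have hlen : l₂.length ≤ n := by
      have := congrArg List.length hsuf
      simp at this
      omega
    have hl2 : 1 ≤ l₂.length := by
      rcases Nat.eq_zero_or_pos l₂.length with h | h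
      · exact absurd (List.length_eq_zero_iff.1 h) hne
      · omega
    have hjn : n - l₂.length < n := by omega
    rw [hsuf, sum_drop_patL hv (by omega) ω, hSn]
    have := hlt _ hjn
    omega

lemma FP_disjoint_aux (hv : ∀ i ω, ξ i ω = 1 ∨ ξ i ω = -1) {mm k k' : ℕ} (hm : 1 ≤ mm)
    (hk : mm ≤ k) (hk' : mm ≤ k') (hkk : k < k') {ω : Ω} (h1 : ω ∈ FP ξ mm k)
    (h2 : ω ∈ FP ξ mm k') : False := by
  obtain ⟨_, _, hS, _, _⟩ := FP_spec hv hm hk h1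
  obtain ⟨_, _, _, hlt, _⟩ := FP_spec hv hm hk' h2
  have := hlt (k + (k - mm)) (by omega)
  omega

lemma FP_disjoint (hv : ∀ i ω, ξ i ω = 1 ∨ ξ i ω = -1) {mm k k' : ℕ} (hm : 1 ≤ mm)
    (hk : mm ≤ k) (hk' : mm ≤ k') (hne : k ≠ k') :
    Disjoint (FP ξ mm k) (FP ξ mm k') := by
  rw [Set.disjoint_left]
  intro ω h1 h2
  rcases hne.lt_or_gt with h | h
  · exact FP_disjoint_aux hv hm hk hk' h h1 h2
  · exact FP_disjoint_aux hv hm hk' hk h h2 h1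

lemma event_eq (hv : ∀ i ω, ξ i ω = 1 ∨ ξ i ω = -1) {x φ N : ℕ}
    (hx : 1 ≤ x) (hφ : 1 ≤ φ) (hφx : φ ≤ x) :
    starvationEvent x φ N ξ = ⋃ k ∈ Finset.Icc (x + φ - 1) (N - 1), FP ξ (x + φ - 1) k := by
  classical
  set mm := x + φ - 1 with hmm
  have hm : 1 ≤ mm := by omega
  have hbuf : ∀ n ω, buffer x φ ξ n ω = 0 ↔ Sw ξ n ω = mm := by
    intro n ω
    unfold buffer Sw
    split_ifs with h <;> constructor <;> intro <;> omega
  ext ω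
  simp only [starvationEvent, Set.mem_setOf_eq, Set.mem_iUnion, Finset.mem_Icc,
    exists_prop]
  constructor
  · rintro ⟨k, hkN, n, hξn, hdn, hb⟩
    have hSn : Sw ξ n ω = mm := (hbuf n ω).1 hb
    have hex : ∃ j, Sw ξ j ω = mm := ⟨n, hSn⟩
    obtain ⟨hk₀m, hn₀, hFP⟩ := mem_FP_of_first_hit hv hm (Nat.find_spec hex)
      (fun j hj => Nat.find_min hex hj)
    refine ⟨departures ξ (Nat.find hex) ω, ⟨hk₀m, ?_⟩, hFP⟩
    have h1 : Nat.find hex ≤ n := Nat.find_min' hex hSn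
    have h2 := departures_mono (ξ := ξ) ω h1
    omega
  · rintro ⟨k, ⟨hmk, hkN⟩, hω⟩
    obtain ⟨hd, _, hS, _, hlast⟩ := FP_spec hv hm hmk hω
    exact ⟨k, hkN, k + (k - mm), hlast, hd, (hbuf _ ω).2 hS⟩

lemma patL_getD {n i : ℕ} (hi : i < n) (ω : Ω) :
    (patL ξ n ω).getD i 0 = -ξ (i+1) ω := by
  rw [List.getD_eq_getElem _ _ (by simpa using hi)]
  simp [patL]

lemma patL_eq_iff {l : List ℤ} {n : ℕ} (hlen : l.length = n) (ω : Ω) :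
    patL ξ n ω = l ↔ ∀ i ∈ Finset.range n, ξ (i+1) ω = -(l.getD i 0) := by
  constructor
  · intro h i hi
    rw [Finset.mem_range] at hi
    rw [← h, patL_getD hi]
    ring
  · intro h
    apply List.ext_getElem (by simp [hlen])
    intro i h1 h2
    have hi : i < n := by simpa using h1
    have := h i (Finset.mem_range.2 hi)
    rw [← List.getD_eq_getElem _ 0 h2, ← List.getD_eq_getElem _ 0 h1, patL_getD hi, this]
    ring

variable [MeasurableSpace Ω] {P : Measure Ω}

lemma measurable_patL_eq (hmeas : ∀ i, Measurable (ξ i)) (n : ℕ) (l : List ℤ) :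
    MeasurableSet {ω | patL ξ n ω = l} := by
  by_cases hlen : l.length = n
  · have : {ω | patL ξ n ω = l} = ⋂ i ∈ Finset.range n, ξ (i+1) ⁻¹' {-(l.getD i 0)} := by
      ext ω
      simp only [Set.mem_setOf_eq, patL_eq_iff hlen, Set.mem_iInter, Set.mem_preimage,
        Set.mem_singleton_iff]
    rw [this]
    exact Set.Finite.measurableSet_biInter (Finset.range n).finite_toSet
      (fun i _ => (hmeas (i+1)) (measurableSet_singleton _))
  · have : {ω | patL ξ n ω = l} = ∅ := by
      ext ω
      simp only [Set.mem_setOf_eq, Set.mem_empty_iff_false, iff_false]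
      intro h
      exact hlen (by rw [← h]; simp)
    rw [this]
    exact MeasurableSet.empty

lemma setOf_patL_mem (n : ℕ) (S : Set (List ℤ)) :
    {ω | patL ξ n ω ∈ S} = ⋃ l ∈ S, {ω | patL ξ n ω = l} := by
  ext ω
  simp only [Set.mem_setOf_eq, Set.mem_iUnion, exists_prop]
  exact ⟨fun h => ⟨_, h, rfl⟩, fun ⟨l, hl, he⟩ => he ▸ hl⟩

lemma FP_measurable (hmeas : ∀ i, Measurable (ξ i)) (mm k : ℕ) :
    MeasurableSet (FP ξ mm k) := by
  rw [show FP ξ mm k = {ω | patL ξ (k + (k - mm)) ω ∈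
      (Ballot.countedSequence k (k - mm) ∩ Ballot.staysPositive)} from rfl,
    setOf_patL_mem]
  exact MeasurableSet.biUnion (Set.to_countable _)
    (fun l _ => measurable_patL_eq hmeas _ l)

lemma prob_patL_eq (hindep : iIndepFun ξ P)
    {n : ℕ} {l : List ℤ} (hlen : l.length = n) :
    P {ω | patL ξ n ω = l} =
      ∏ i ∈ Finset.range n, P {ω | ξ (i+1) ω = -(l.getD i 0)} := by
  classical
  have key := hindep.meas_biInter (S := (Finset.range n).image (· + 1))
    (s := fun j => ξ j ⁻¹' {-(l.getD (j - 1) 0)})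
    (fun j _ => ⟨{-(l.getD (j - 1) 0)}, measurableSet_singleton _, rfl⟩)
  have hset : {ω | patL ξ n ω = l} =
      ⋂ j ∈ (Finset.range n).image (· + 1), ξ j ⁻¹' {-(l.getD (j - 1) 0)} := by
    ext ω
    simp only [Set.mem_setOf_eq, patL_eq_iff hlen, Set.mem_iInter, Set.mem_preimage,
      Set.mem_singleton_iff, Finset.mem_image, Finset.mem_range]
    constructor
    · rintro h j ⟨i, hi, rfl⟩
      simpa using h i hi
    · intro h i hi
      simpa using h (i + 1) ⟨i, hi, rfl⟩
  rw [hset, key, Finset.prod_image (fun a _ b _ h => by omega)]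
  refine Finset.prod_congr rfl fun i _ => ?_
  congr 1

/-- Product of a weight over the entries of a list, as a product over positions. -/
lemma prod_getD_eq (w : ℤ → ℝ≥0∞) (l : List ℤ) :
    ∏ i ∈ Finset.range l.length, w (l.getD i 0) = (l.map w).prod := by
  induction l with
  | nil => simp
  | cons a l ih =>
    rw [List.length_cons, Finset.prod_range_succ']
    simp only [List.getD_cons_succ, List.getD_cons_zero, ih]
    rw [List.map_cons, List.prod_cons, mul_comm]

lemma map_prod_counted {k a : ℕ} {l : List ℤ} (hl : l ∈ Ballot.countedSequence k a)
    (w : ℤ → ℝ≥0∞) : (l.map w).prod = w 1 ^ k * w (-1) ^ a := by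
  have hperm := Ballot.mem_countedSequence_iff_perm.1 hl
  rw [(hperm.map w).prod_eq]
  simp [List.map_append, List.prod_replicate]

lemma prob_pattern {p q : ℝ}
    (hindep : iIndepFun ξ P)
    (harr : ∀ i, P {ω | ξ i ω = 1} = ENNReal.ofReal p)
    (hdep : ∀ i, P {ω | ξ i ω = -1} = ENNReal.ofReal q)
    {k a : ℕ} {l : List ℤ} (hl : l ∈ Ballot.countedSequence k a) :
    P {ω | patL ξ (k + a) ω = l} = ENNReal.ofReal q ^ k * ENNReal.ofReal p ^ a := by
  classical
  have hlen : l.length = k + a := Ballot.length_of_mem_countedSequence hl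
  rw [prob_patL_eq hindep hlen]
  set w : ℤ → ℝ≥0∞ := fun z => if z = 1 then ENNReal.ofReal q else ENNReal.ofReal p with hw
  have hstep : ∀ i ∈ Finset.range (k + a),
      P {ω | ξ (i+1) ω = -(l.getD i 0)} = w (l.getD i 0) := by
    intro i hi
    rw [Finset.mem_range] at hi
    have hmem : l.getD i 0 ∈ l := by
      rw [List.getD_eq_getElem _ 0 (by omega)]
      exact List.getElem_mem _
    rcases Ballot.mem_of_mem_countedSequence hl hmem with h | h <;> rw [h]
    · simpa [hw] using hdep (i + 1)
    · simp only [neg_neg, hw, if_neg (by norm_num : (-1 : ℤ) ≠ 1)]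
      exact harr (i + 1)
  rw [Finset.prod_congr rfl hstep, ← hlen, prod_getD_eq, map_prod_counted hl]
  simp [hw]

lemma count_FP_set {mm k : ℕ} (hm : 1 ≤ mm) (hk : mm ≤ k) :
    MeasureTheory.Measure.count
        (Ballot.countedSequence k (k - mm) ∩ Ballot.staysPositive) =
      (mm : ℝ≥0∞) / ((k + (k - mm) : ℕ) : ℝ≥0∞) * ((k + (k - mm)).choose k : ℝ≥0∞) := by
  set cs := Ballot.countedSequence k (k - mm) with hcs
  have hcount : MeasureTheory.Measure.count cs = ((k + (k - mm)).choose k : ℝ≥0∞) :=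
    Ballot.count_countedSequence k (k - mm)
  have hne : MeasureTheory.Measure.count cs ≠ 0 := by
    rw [hcount]
    exact_mod_cast (Nat.choose_pos (Nat.le_add_right _ _)).ne'
  have htop : MeasureTheory.Measure.count cs ≠ ⊤ := by
    rw [hcount]; exact ENNReal.natCast_ne_top _
  have hb := Ballot.ballot_problem (k - mm) k (by omega)
  rw [show ProbabilityTheory.uniformOn cs =
      ProbabilityTheory.cond MeasureTheory.Measure.count cs from rfl,
    ProbabilityTheory.cond_apply Ballot.list_int_measurableSet] at hb
  have hsub : (k : ℝ≥0∞) - ((k - mm : ℕ) : ℝ≥0∞) = (mm : ℝ≥0∞) := by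
    have h1 : (k : ℝ≥0∞) = ((k - mm : ℕ) : ℝ≥0∞) + (mm : ℝ≥0∞) := by
      rw [← Nat.cast_add]
      exact congrArg Nat.cast (by omega : k = (k - mm) + mm)
    rw [h1, ENNReal.add_sub_cancel_left (ENNReal.natCast_ne_top _)]
  have hadd : (k : ℝ≥0∞) + ((k - mm : ℕ) : ℝ≥0∞) = ((k + (k - mm) : ℕ) : ℝ≥0∞) := by
    rw [Nat.cast_add]
  rw [hsub, hadd] at hb
  calc MeasureTheory.Measure.count (cs ∩ Ballot.staysPositive)
      = MeasureTheory.Measure.count cs *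
        ((MeasureTheory.Measure.count cs)⁻¹ *
          MeasureTheory.Measure.count (cs ∩ Ballot.staysPositive)) := by
        rw [← mul_assoc, ENNReal.mul_inv_cancel hne htop, one_mul]
    _ = ((k + (k - mm)).choose k : ℝ≥0∞) *
        ((mm : ℝ≥0∞) / ((k + (k - mm) : ℕ) : ℝ≥0∞)) := by rw [hb, hcount]
    _ = _ := by rw [mul_comm]

lemma prob_FP {p q : ℝ}
    (hindep : iIndepFun ξ P)
    (hmeas : ∀ i, Measurable (ξ i))
    (harr : ∀ i, P {ω | ξ i ω = 1} = ENNReal.ofReal p)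
    (hdep : ∀ i, P {ω | ξ i ω = -1} = ENNReal.ofReal q)
    {mm k : ℕ} (hm : 1 ≤ mm) (hk : mm ≤ k) :
    P (FP ξ mm k) =
      (mm : ℝ≥0∞) / ((k + (k - mm) : ℕ) : ℝ≥0∞) * ((k + (k - mm)).choose k : ℝ≥0∞) *
        (ENNReal.ofReal q ^ k * ENNReal.ofReal p ^ (k - mm)) := by
  classical
  have hfin : (Ballot.countedSequence k (k - mm) ∩ Ballot.staysPositive).Finite :=
    (Ballot.countedSequence_finite _ _).inter_of_left _
  have hFP : FP ξ mm k = ⋃ l ∈ hfin.toFinset, {ω | patL ξ (k + (k - mm)) ω = l} := by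
    rw [show FP ξ mm k = {ω | patL ξ (k + (k - mm)) ω ∈
        (Ballot.countedSequence k (k - mm) ∩ Ballot.staysPositive)} from rfl,
      setOf_patL_mem]
    ext ω
    simp [Set.Finite.mem_toFinset]
  rw [hFP, measure_biUnion_finset ?_ (fun l _ => measurable_patL_eq hmeas _ l)]
  · have hsum : ∀ l ∈ hfin.toFinset,
        P {ω | patL ξ (k + (k - mm)) ω = l} =
          ENNReal.ofReal q ^ k * ENNReal.ofReal p ^ (k - mm) := by
      intro l hl
      exact prob_pattern hindep harr hdep ((hfin.mem_toFinset.1 hl).1)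
    rw [Finset.sum_congr rfl hsum, Finset.sum_const, nsmul_eq_mul]
    congr 1
    rw [← count_FP_set hm hk, MeasureTheory.Measure.count_apply_finite _ hfin]
  · intro l hl l' hl' hne
    apply Set.disjoint_left.2
    intro ω h1 h2
    exact hne (by rw [← h1, ← h2])
end BSC

end Aux
/-- In the BSC model with offset `φ ≤ x`, the probability of the starvation event
for file size `N` equals
`P_s^<(N,φ,x) = ∑_{k=x+φ−1}^{N−1} ((x+φ−1)/(2k−x−φ+1)) · C(2k−x−φ+1, k−x−φ+1) · p^{k−x−φ+1} · q^k`. -/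
theorem BSC_starvation_probability_small_offset
    {Ω : Type*} [MeasurableSpace Ω] (P : Measure Ω) [IsProbabilityMeasure P]
    (p q : ℝ) (hp0 : 0 < p) (hp1 : p < 1) (hq : q = 1 - p)
    (ξ : ℕ → Ω → ℤ)
    (hmeas : ∀ i, Measurable (ξ i))
    (hindep : iIndepFun ξ P)
    (hval : ∀ i ω, ξ i ω = 1 ∨ ξ i ω = -1)
    (harr : ∀ i, P {ω | ξ i ω = 1} = ENNReal.ofReal p)
    (hdep : ∀ i, P {ω | ξ i ω = -1} = ENNReal.ofReal q)
    (N x φ : ℕ) (hN : 1 ≤ N) (hx : 1 ≤ x) (hφ : 1 ≤ φ) (hφx : φ ≤ x) :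
    P (starvationEvent x φ N ξ) =
      ENNReal.ofReal (∑ k ∈ Finset.Icc (x + φ - 1) (N - 1),
        (((x : ℝ) + φ - 1) / (2 * k - x - φ + 1)) *
          (Nat.choose (2 * k + 1 - x - φ) (k + 1 - x - φ)) *
          p ^ (k + 1 - x - φ) * q ^ k) := by
  classical
  have hq0 : 0 ≤ q := by rw [hq]; linarith
  have hp0' : 0 ≤ p := hp0.le
  have hm : 1 ≤ x + φ - 1 := by omega
  rw [BSC.event_eq hval hx hφ hφx]
  set mm := x + φ - 1 with hmm
  have hdisj : (↑(Finset.Icc mm (N - 1)) : Set ℕ).PairwiseDisjoint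
      (fun k => BSC.FP ξ mm k) := by
    intro k hk k' hk' hne
    simp only [Finset.coe_Icc, Set.mem_Icc] at hk hk'
    exact BSC.FP_disjoint hval hm hk.1 hk'.1 hne
  rw [measure_biUnion_finset hdisj (fun k _ => BSC.FP_measurable hmeas mm k)]
  have hterm : ∀ k ∈ Finset.Icc mm (N - 1),
      P (BSC.FP ξ mm k) = ENNReal.ofReal
        ((((x : ℝ) + φ - 1) / (2 * k - x - φ + 1)) *
          (Nat.choose (2 * k + 1 - x - φ) (k + 1 - x - φ)) *
          p ^ (k + 1 - x - φ) * q ^ k) := by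
    intro k hk
    obtain ⟨hk1, hk2⟩ := Finset.mem_Icc.1 hk
    rw [BSC.prob_FP hindep hmeas harr hdep hm hk1]
    set n := k + (k - mm) with hn
    set a := k - mm with ha2
    have hnk : 2 * k + 1 - x - φ = n := by omega
    have hak : k + 1 - x - φ = a := by omega
    rw [hnk, hak]
    have hnpos : (0 : ℝ) < n := by
      have : 1 ≤ n := by omega
      exact_mod_cast this
    have hchoose : n.choose a = n.choose k := by
      rw [show a = n - k by omega]
      exact Nat.choose_symm (by omega)
    have hcast1 : ((x : ℝ) + φ - 1) = (mm : ℝ) := by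
      rw [hmm]
      push_cast [Nat.cast_sub (by omega : 1 ≤ x + φ)]
      ring
    have hcast2 : (2 * (k : ℝ) - x - φ + 1) = (n : ℝ) := by
      have h1 : n + (x + φ) = 2 * k + 1 := by omega
      have h2 : ((n : ℝ)) + (x + φ) = 2 * k + 1 := by exact_mod_cast h1
      linarith
    rw [hcast1, hcast2, hchoose]
    rw [ENNReal.ofReal_mul (by positivity), ENNReal.ofReal_mul (by positivity),
      ENNReal.ofReal_mul (by positivity),
      ENNReal.ofReal_pow hp0', ENNReal.ofReal_pow hq0,
      ENNReal.ofReal_div_of_pos hnpos, ENNReal.ofReal_natCast, ENNReal.ofReal_natCast,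
      ENNReal.ofReal_natCast]
    ring
  rw [Finset.sum_congr rfl hterm, ← ENNReal.ofReal_sum_of_nonneg]
  intro k hk
  obtain ⟨hk1, hk2⟩ := Finset.mem_Icc.1 hk
  have h1 : (0:ℝ) ≤ (x : ℝ) + φ - 1 := by
    have : (1:ℝ) ≤ (x:ℝ) := by exact_mod_cast hx
    have : (1:ℝ) ≤ (φ:ℝ) := by exact_mod_cast hφ
    linarith
  have h2 : (0:ℝ) ≤ 2 * (k:ℝ) - x - φ + 1 := by
    have h3 : x + φ - 1 ≤ k := hk1
    have h4 : ((x + φ - 1 : ℕ) : ℝ) ≤ (k : ℝ) := by exact_mod_cast h3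
    rw [Nat.cast_sub (by omega : 1 ≤ x + φ)] at h4
    push_cast at h4
    linarith
  have h5 : (0:ℝ) ≤ p := hp0.le
  positivity
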